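/- Let (α_k) and (α'_k) be real sequences with |α_k|, |α'_k| ≤ C k^{−1/4} and |α'_k − α_k| ≤ C k^{−3/4} for k ≥ 1. Then for n ≥ 2, the sums A(n) = Σ_{k≥1, n−k odd} α_k²/(n−k) and A'(n) = Σ_{k≥1, n−k odd} α'_k²/(n−k) satisfy |A(n)|, |A'(n)| ≤ C' log(en)/√n and |A(n) − A'(n)| ≤ C' log(en)/n for a constant C' depending only on C. -/

import Mathlib

lemma F2 (m : ℕ) : ∑ k ∈ Finset.range m, ((k:ℝ)+1)⁻¹ ≤ 1 + Real.log m := by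
  have h := harmonic_le_one_add_log m
  have e : ((harmonic m : ℚ) : ℝ) = ∑ k ∈ Finset.range m, ((k:ℝ)+1)⁻¹ := by
    rw [harmonic]; push_cast; exact Finset.sum_congr rfl (fun k _ => by ring)
  calc ∑ k ∈ Finset.range m, ((k:ℝ)+1)⁻¹ = ((harmonic m : ℚ) : ℝ) := e.symm
    _ ≤ 1 + Real.log m := h

lemma rpow_neg_half_eq (x : ℝ) (hx : 0 ≤ x) : x ^ (-(1/2:ℝ)) = (Real.sqrt x)⁻¹ := by
  rw [Real.rpow_neg hx, Real.sqrt_eq_rpow]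

-- F1: sum of (k+1)^{-1/2} ≤ 2 sqrt m
lemma F1 (m : ℕ) : ∑ k ∈ Finset.range m, ((k:ℝ)+1) ^ (-(1/2:ℝ)) ≤ 2 * Real.sqrt m := by
  have key : ∀ k ∈ Finset.range m, ((k:ℝ)+1) ^ (-(1/2:ℝ)) ≤
      2 * Real.sqrt (k+1) - 2 * Real.sqrt k := by
    intro k _
    rw [rpow_neg_half_eq _ (by positivity)]
    have hb : (0:ℝ) ≤ (k:ℝ) := by positivity
    have ha : (0:ℝ) < (k:ℝ) + 1 := by positivity
    set A := Real.sqrt ((k:ℝ)+1) with hA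
    set B := Real.sqrt (k:ℝ) with hB
    have hA2 : A^2 = (k:ℝ)+1 := Real.sq_sqrt ha.le
    have hB2 : B^2 = (k:ℝ) := Real.sq_sqrt hb
    have hApos : 0 < A := Real.sqrt_pos.mpr ha
    have hBA : B ≤ A := Real.sqrt_le_sqrt (by linarith)
    have hBnn : 0 ≤ B := Real.sqrt_nonneg _
    rw [inv_le_iff_one_le_mul₀ hApos]  -- maybe wrong name
    nlinarith [sq_nonneg (A - B), sq_nonneg (A + B)]
  calc ∑ k ∈ Finset.range m, ((k:ℝ)+1) ^ (-(1/2:ℝ))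
      ≤ ∑ k ∈ Finset.range m, (2 * Real.sqrt ((k:ℝ)+1) - 2 * Real.sqrt (k:ℝ)) :=
        Finset.sum_le_sum key
    _ = 2 * Real.sqrt m - 2 * Real.sqrt 0 := by
        have := Finset.sum_range_sub (fun k : ℕ => 2 * Real.sqrt (k:ℝ)) m
        simpa using this
    _ ≤ 2 * Real.sqrt m := by simp [Real.sqrt_zero]



lemma step_half (t : ℝ) (ht : 1 ≤ t) :
    (t+1) ^ (-(1+(1/2:ℝ))) ≤ 2 * (t ^ (-(1/2:ℝ)) - (t+1) ^ (-(1/2:ℝ))) := by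
  have ht0 : (0:ℝ) < t := by linarith
  have ht1 : (0:ℝ) < t + 1 := by linarith
  have e1 : (t+1) ^ (-(1+(1/2:ℝ))) = (t+1)⁻¹ * (t+1) ^ (-(1/2:ℝ)) := by
    rw [← Real.rpow_neg_one (t+1), ← Real.rpow_add ht1]; ring_nf
  rw [e1, rpow_neg_half_eq _ ht0.le, rpow_neg_half_eq _ ht1.le]
  set A := Real.sqrt (t+1) with hA
  set B := Real.sqrt t with hB
  have hA2 : A^2 = t+1 := Real.sq_sqrt ht1.le
  have hB2 : B^2 = t := Real.sq_sqrt ht0.le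
  have hApos : 0 < A := Real.sqrt_pos.mpr ht1
  have hBpos : 0 < B := Real.sqrt_pos.mpr ht0
  have hBA : B ≤ A := Real.sqrt_le_sqrt (by linarith)
  have key : (A^2)⁻¹ * A⁻¹ = (A^3)⁻¹ := by
    rw [← mul_inv]; ring_nf
  rw [← hA2, key]
  have hdiff : (A - B) * (A + B) = 1 := by nlinarith
  have e2 : B⁻¹ - A⁻¹ = (A - B) / (A * B) := by
    rw [inv_sub_inv (ne_of_gt hBpos) (ne_of_gt hApos), mul_comm B A]
  rw [e2, inv_eq_one_div,
    show 2*((A-B)/(A*B)) = (2*(A-B))/(A*B) from by ring,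
    div_le_div_iff₀ (by positivity) (by positivity), one_mul]
  have h3 : 2*(A-B)*A^3*(A+B) = 2*A^3 := by linear_combination 2*A^3*hdiff
  nlinarith [mul_pos hApos hBpos, mul_pos (mul_pos hApos hApos) hApos,
    mul_le_mul_of_nonneg_left hBA (mul_nonneg hApos.le hBpos.le)]

lemma step_one (t : ℝ) (ht : 1 ≤ t) :
    (t+1) ^ (-(1+(1:ℝ))) ≤ t⁻¹ - (t+1)⁻¹ := by
  have ht0 : (0:ℝ) < t := by linarith
  have ht1 : (0:ℝ) < t + 1 := by linarith
  have e1 : (t+1) ^ (-(1+(1:ℝ))) = ((t+1)^(2:ℕ))⁻¹ := by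
    rw [← Real.rpow_natCast (t+1) 2, ← Real.rpow_neg ht1.le]; norm_num
  rw [e1]
  have e2 : t⁻¹ - (t+1)⁻¹ = (t*(t+1))⁻¹ := by field_simp; ring
  rw [e2]
  apply inv_anti₀ (by positivity)
  nlinarith

lemma Thalf (n m : ℕ) (hn : 1 ≤ n) :
    ∑ j ∈ Finset.range m, ((j:ℝ)+(2*(n:ℝ)+1)) ^ (-(1+(1/2:ℝ))) ≤
      2 * (2*(n:ℝ)) ^ (-(1/2:ℝ)) := by
  have hn1 : (1:ℝ) ≤ (n:ℝ) := by exact_mod_cast hn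
  have key : ∀ j ∈ Finset.range m, ((j:ℝ)+(2*(n:ℝ)+1)) ^ (-(1+(1/2:ℝ))) ≤
      2 * ((j:ℝ)+2*(n:ℝ)) ^ (-(1/2:ℝ)) - 2 * (((j:ℝ)+1)+2*(n:ℝ)) ^ (-(1/2:ℝ)) := by
    intro j _
    have h := step_half ((j:ℝ)+2*(n:ℝ)) (by linarith [Nat.cast_nonneg (α := ℝ) j])
    calc ((j:ℝ)+(2*(n:ℝ)+1)) ^ (-(1+(1/2:ℝ)))
        = (((j:ℝ)+2*(n:ℝ))+1) ^ (-(1+(1/2:ℝ))) := by ring_nf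
      _ ≤ 2 * (((j:ℝ)+2*(n:ℝ)) ^ (-(1/2:ℝ)) - (((j:ℝ)+2*(n:ℝ))+1) ^ (-(1/2:ℝ))) := h
      _ = 2 * ((j:ℝ)+2*(n:ℝ)) ^ (-(1/2:ℝ)) - 2 * (((j:ℝ)+1)+2*(n:ℝ)) ^ (-(1/2:ℝ)) := by
          ring_nf
  calc ∑ j ∈ Finset.range m, ((j:ℝ)+(2*(n:ℝ)+1)) ^ (-(1+(1/2:ℝ)))
      ≤ ∑ j ∈ Finset.range m, (2 * ((j:ℝ)+2*(n:ℝ)) ^ (-(1/2:ℝ)) -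
          2 * (((j:ℝ)+1)+2*(n:ℝ)) ^ (-(1/2:ℝ))) := Finset.sum_le_sum key
    _ = 2 * ((0:ℝ)+2*(n:ℝ)) ^ (-(1/2:ℝ)) - 2 * (((m:ℝ))+2*(n:ℝ)) ^ (-(1/2:ℝ)) := by
        have := Finset.sum_range_sub' (fun j : ℕ => 2 * ((j:ℝ)+2*(n:ℝ)) ^ (-(1/2:ℝ))) m
        simp only [Nat.cast_add, Nat.cast_one, Nat.cast_zero] at this ⊢
        rw [← this]
    _ ≤ 2 * (2*(n:ℝ)) ^ (-(1/2:ℝ)) := by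
        have : (0:ℝ) ≤ 2 * (((m:ℝ))+2*(n:ℝ)) ^ (-(1/2:ℝ)) := by positivity
        rw [zero_add]; linarith

lemma Tone (n m : ℕ) (hn : 1 ≤ n) :
    ∑ j ∈ Finset.range m, ((j:ℝ)+(2*(n:ℝ)+1)) ^ (-(1+(1:ℝ))) ≤ (2*(n:ℝ))⁻¹ := by
  have hn1 : (1:ℝ) ≤ (n:ℝ) := by exact_mod_cast hn
  have key : ∀ j ∈ Finset.range m, ((j:ℝ)+(2*(n:ℝ)+1)) ^ (-(1+(1:ℝ))) ≤
      ((j:ℝ)+2*(n:ℝ))⁻¹ - (((j:ℝ)+1)+2*(n:ℝ))⁻¹ := by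
    intro j _
    have h := step_one ((j:ℝ)+2*(n:ℝ)) (by linarith [Nat.cast_nonneg (α := ℝ) j])
    calc ((j:ℝ)+(2*(n:ℝ)+1)) ^ (-(1+(1:ℝ)))
        = (((j:ℝ)+2*(n:ℝ))+1) ^ (-(1+(1:ℝ))) := by ring_nf
      _ ≤ ((j:ℝ)+2*(n:ℝ))⁻¹ - (((j:ℝ)+2*(n:ℝ))+1)⁻¹ := h
      _ = ((j:ℝ)+2*(n:ℝ))⁻¹ - (((j:ℝ)+1)+2*(n:ℝ))⁻¹ := by ring_nf
  calc ∑ j ∈ Finset.range m, ((j:ℝ)+(2*(n:ℝ)+1)) ^ (-(1+(1:ℝ)))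
      ≤ ∑ j ∈ Finset.range m, (((j:ℝ)+2*(n:ℝ))⁻¹ - (((j:ℝ)+1)+2*(n:ℝ))⁻¹) :=
        Finset.sum_le_sum key
    _ = ((0:ℝ)+2*(n:ℝ))⁻¹ - (((m:ℝ))+2*(n:ℝ))⁻¹ := by
        have := Finset.sum_range_sub' (fun j : ℕ => ((j:ℝ)+2*(n:ℝ))⁻¹) m
        simp only [Nat.cast_add, Nat.cast_one, Nat.cast_zero] at this ⊢
        rw [← this]
    _ ≤ (2*(n:ℝ))⁻¹ := by
        have : (0:ℝ) ≤ (((m:ℝ))+2*(n:ℝ))⁻¹ := by positivity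
        rw [zero_add]; linarith

lemma mid (n : ℕ) (hn : 1 ≤ n) :
    ∑ k ∈ Finset.range (2*n+1), (if k = n then 0 else |(n:ℝ)-(k:ℝ)|⁻¹) ≤
      2 * (1 + Real.log n) := by
  have hsplit : ∑ k ∈ Finset.range (2*n+1), (if k = n then 0 else |(n:ℝ)-(k:ℝ)|⁻¹)
      = (∑ k ∈ Finset.range n, (if k = n then 0 else |(n:ℝ)-(k:ℝ)|⁻¹))
        + ∑ k ∈ Finset.Ico n (2*n+1), (if k = n then 0 else |(n:ℝ)-(k:ℝ)|⁻¹) := by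
    rw [Finset.range_eq_Ico, ← Finset.sum_Ico_consecutive _ (Nat.zero_le n) (by omega),
      ← Finset.range_eq_Ico]
  rw [hsplit]
  have h1 : ∑ k ∈ Finset.range n, (if k = n then 0 else |(n:ℝ)-(k:ℝ)|⁻¹)
      = ∑ j ∈ Finset.range n, ((j:ℝ)+1)⁻¹ := by
    rw [← Finset.sum_range_reflect (fun j => ((j:ℝ)+1)⁻¹) n]
    refine Finset.sum_congr rfl (fun k hk => ?_)
    rw [Finset.mem_range] at hk
    rw [if_neg (by omega)]
    have h1 : ((n - 1 - k : ℕ) : ℝ) + 1 = (n:ℝ) - k := by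
      have e : (n - 1 - k : ℕ) = n - (k+1) := by omega
      rw [e, Nat.cast_sub (by omega)]
      push_cast; ring
    rw [h1, abs_of_pos (by
      have : (k:ℝ) < (n:ℝ) := by exact_mod_cast hk
      linarith)]
  have h2 : ∑ k ∈ Finset.Ico n (2*n+1), (if k = n then 0 else |(n:ℝ)-(k:ℝ)|⁻¹)
      ≤ ∑ j ∈ Finset.range n, ((j:ℝ)+1)⁻¹ := by
    rw [Finset.sum_Ico_eq_sum_range]
    have hlen : 2*n+1-n = n+1 := by omega
    rw [hlen, Finset.sum_range_succ']
    simp only [if_pos (by omega : n + 0 = n)]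
    rw [add_zero]
    apply le_of_eq
    refine Finset.sum_congr rfl (fun j hj => ?_)
    rw [if_neg (by omega)]
    have : |(n:ℝ) - ((n + (j+1) : ℕ):ℝ)| = (j:ℝ) + 1 := by
      push_cast
      rw [abs_of_nonpos (by linarith), neg_sub]
      ring
    rw [this]
  have hF := F2 n
  linarith

lemma key (n : ℕ) (hn : 2 ≤ n) (s D S T : ℝ) (hs : 0 ≤ s) (hD : 0 ≤ D)
    (b : ℕ → ℝ) (hb : ∀ k : ℕ, 1 ≤ k → |b k| ≤ D * (k:ℝ) ^ (-s))
    (hS : ∑ k ∈ Finset.range (2*n), ((k:ℝ)+1) ^ (-s) ≤ S)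
    (hT : ∀ m : ℕ, ∑ j ∈ Finset.range m, ((j:ℝ)+(2*(n:ℝ)+1)) ^ (-(1+s)) ≤ T) :
    Summable (fun k : ℕ => if 1 ≤ k ∧ Odd ((n:ℤ) - (k:ℤ)) then b k / ((n:ℝ) - k) else 0) ∧
    |∑' k : ℕ, (if 1 ≤ k ∧ Odd ((n:ℤ) - (k:ℤ)) then b k / ((n:ℝ) - k) else 0)| ≤
      D * ((2/(n:ℝ)) * S + 2 ^ s * (n:ℝ) ^ (-s) * (2 * (1 + Real.log n)) + 2 * T) := by
  have hN0 : (0:ℝ) < (n:ℝ) := by positivity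
  have hN2 : (2:ℝ) ≤ (n:ℝ) := by exact_mod_cast hn
  set g : ℕ → ℝ := fun k => if 1 ≤ k ∧ Odd ((n:ℤ) - (k:ℤ)) then b k / ((n:ℝ) - k) else 0
    with hg
  set h1 : ℕ → ℝ := fun k => if 1 ≤ k ∧ k ≤ 2*n then D * (2/(n:ℝ)) * (k:ℝ) ^ (-s) else 0
    with hh1
  set h2 : ℕ → ℝ := fun k =>
    if 1 ≤ k ∧ k ≠ n ∧ k ≤ 2*n then D * 2^s * (n:ℝ)^(-s) * |(n:ℝ)-(k:ℝ)|⁻¹ else 0 with hh2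
  set h3 : ℕ → ℝ := fun k => if 2*n < k then 2*D*(k:ℝ)^(-(1+s)) else 0 with hh3
  have nn1 : ∀ k, 0 ≤ h1 k := by intro k; simp only [hh1]; split <;> positivity
  have nn2 : ∀ k, 0 ≤ h2 k := by intro k; simp only [hh2]; split <;> positivity
  have nn3 : ∀ k, 0 ≤ h3 k := by intro k; simp only [hh3]; split <;> positivity
  -- pointwise bound
  have habs : ∀ k, |g k| ≤ h1 k + h2 k + h3 k := by
    intro k
    by_cases hcond : 1 ≤ k ∧ Odd ((n:ℤ) - (k:ℤ))
    · obtain ⟨hk1, hodd⟩ := hcond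
      have hkn : k ≠ n := by
        rintro rfl
        rw [sub_self] at hodd
        exact (Int.not_odd_iff_even.mpr Even.zero) hodd
      have hne : ((n:ℤ) - (k:ℤ)) ≠ 0 := by
        intro h0; rw [h0] at hodd; exact (Int.not_odd_iff_even.mpr Even.zero) hodd
      have habs1 : (1:ℝ) ≤ |(n:ℝ)-(k:ℝ)| := by
        have h1' : (1:ℤ) ≤ |(n:ℤ)-(k:ℤ)| := Int.one_le_abs hne
        have : ((|(n:ℤ)-(k:ℤ)| : ℤ) : ℝ) = |(n:ℝ)-(k:ℝ)| := by push_cast; ring_nf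
        rw [← this]; exact_mod_cast h1'
      have hd0 : (0:ℝ) < |(n:ℝ)-(k:ℝ)| := by linarith
      have hr0 : (0:ℝ) < (k:ℝ) := by exact_mod_cast hk1
      have hr1 : (1:ℝ) ≤ (k:ℝ) := by exact_mod_cast hk1
      have hgk : |g k| = |b k| / |(n:ℝ)-(k:ℝ)| := by
        rw [hg]; simp only [if_pos (⟨hk1, hodd⟩ : 1 ≤ k ∧ Odd ((n:ℤ) - (k:ℤ)))]
        exact abs_div _ _
      have hM : |g k| ≤ D * (k:ℝ)^(-s) / |(n:ℝ)-(k:ℝ)| := by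
        rw [hgk]
        exact div_le_div_of_nonneg_right (hb k hk1) hd0.le |>.trans_eq rfl
      rcases le_or_gt k (2*n) with hk2n | hk2n
      · rcases le_or_gt (2*k) n with hreg | hreg
        · -- small k : use h1
          have hdist : (n:ℝ)/2 ≤ |(n:ℝ)-(k:ℝ)| := by
            have : (2*(k:ℝ)) ≤ (n:ℝ) := by exact_mod_cast hreg
            rw [abs_of_pos (by linarith)]; linarith
          have : D * (k:ℝ)^(-s) / |(n:ℝ)-(k:ℝ)| ≤ h1 k := by
            rw [hh1]; simp only [if_pos (⟨hk1, hk2n⟩ : 1 ≤ k ∧ k ≤ 2*n)]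
            calc D * (k:ℝ)^(-s) / |(n:ℝ)-(k:ℝ)| ≤ D * (k:ℝ)^(-s) / ((n:ℝ)/2) :=
                  div_le_div_of_nonneg_left (by positivity) (by positivity) hdist
              _ = D * (2/(n:ℝ)) * (k:ℝ)^(-s) := by field_simp
          linarith [hM, this, nn2 k, nn3 k]
        · -- medium k : use h2
          have hps : (n:ℝ)^s ≤ 2^s * (k:ℝ)^s := by
            have h2k : (n:ℝ) ≤ 2*(k:ℝ) := by exact_mod_cast hreg.le
            calc (n:ℝ)^s ≤ (2*(k:ℝ))^s := Real.rpow_le_rpow hN0.le h2k hs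
              _ = 2^s * (k:ℝ)^s := Real.mul_rpow (by norm_num) hr0.le
          have hinv : (k:ℝ)^(-s) ≤ 2^s * (n:ℝ)^(-s) := by
            rw [Real.rpow_neg hr0.le, Real.rpow_neg hN0.le]
            rw [show (2:ℝ)^s * ((n:ℝ)^s)⁻¹ = ((n:ℝ)^s / 2^s)⁻¹ by
              rw [inv_div]; ring]
            apply inv_anti₀ (by positivity)
            rw [div_le_iff₀ (by positivity)]
            calc (n:ℝ)^s ≤ 2^s * (k:ℝ)^s := hps
              _ = (k:ℝ)^s * 2^s := by ring
          have : D * (k:ℝ)^(-s) / |(n:ℝ)-(k:ℝ)| ≤ h2 k := by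
            rw [hh2]
            simp only [if_pos (⟨hk1, hkn, hk2n⟩ : 1 ≤ k ∧ k ≠ n ∧ k ≤ 2*n)]
            rw [div_eq_mul_inv]
            have : D * (k:ℝ)^(-s) ≤ D * 2^s * (n:ℝ)^(-s) := by
              calc D * (k:ℝ)^(-s) ≤ D * (2^s * (n:ℝ)^(-s)) :=
                    mul_le_mul_of_nonneg_left hinv hD
                _ = D * 2^s * (n:ℝ)^(-s) := by ring
            exact mul_le_mul_of_nonneg_right this (by positivity)
          linarith [hM, this, nn1 k, nn3 k]
      · -- large k : use h3
        have hk2n' : (2*(n:ℝ)) ≤ (k:ℝ) := by exact_mod_cast hk2n.le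
        have hdist : (k:ℝ)/2 ≤ |(n:ℝ)-(k:ℝ)| := by
          rw [abs_sub_comm, abs_of_pos (by linarith)]; linarith
        have : D * (k:ℝ)^(-s) / |(n:ℝ)-(k:ℝ)| ≤ h3 k := by
          rw [hh3]; simp only [if_pos hk2n]
          calc D * (k:ℝ)^(-s) / |(n:ℝ)-(k:ℝ)| ≤ D * (k:ℝ)^(-s) / ((k:ℝ)/2) :=
                div_le_div_of_nonneg_left (by positivity) (by positivity) hdist
            _ = 2*D*(k:ℝ)^(-(1+s)) := by
                rw [show (-(1+s)) = (-1) + (-s) by ring, Real.rpow_add hr0,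
                  Real.rpow_neg_one]
                field_simp
        linarith [hM, this, nn1 k, nn2 k]
    · rw [hg]; simp only [if_neg hcond, abs_zero]
      have := nn1 k; have := nn2 k; have := nn3 k; linarith
  -- summability
  have hs1 : Summable h1 := by
    apply summable_of_ne_finset_zero (s := Finset.range (2*n+1))
    intro k hk
    rw [Finset.mem_range, not_lt] at hk
    rw [hh1]; exact if_neg (by omega)
  have hs2 : Summable h2 := by
    apply summable_of_ne_finset_zero (s := Finset.range (2*n+1))
    intro k hk
    rw [Finset.mem_range, not_lt] at hk
    rw [hh2]; exact if_neg (by omega)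
  have htail_eq : ∀ j : ℕ, h3 (j + (2*n+1)) = 2*D*((j:ℝ)+(2*(n:ℝ)+1))^(-(1+s)) := by
    intro j
    simp only [hh3]
    rw [if_pos (by omega : 2*n < j + (2*n+1))]
    congr 1
    push_cast; ring_nf
  have hs3tail : Summable (fun j : ℕ => h3 (j + (2*n+1))) := by
    apply summable_of_sum_range_le (c := 2*D*T)
    · intro j; rw [htail_eq]; positivity
    · intro m
      calc ∑ j ∈ Finset.range m, h3 (j + (2*n+1))
          = 2*D * ∑ j ∈ Finset.range m, ((j:ℝ)+(2*(n:ℝ)+1))^(-(1+s)) := by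
            rw [Finset.mul_sum]; exact Finset.sum_congr rfl (fun j _ => htail_eq j)
        _ ≤ 2*D*T := mul_le_mul_of_nonneg_left (hT m) (by positivity)
  have hs3 : Summable h3 := (summable_nat_add_iff (2*n+1)).mp hs3tail
  have hsum123 : Summable (fun k => h1 k + h2 k + h3 k) := (hs1.add hs2).add hs3
  have hsabs : Summable (fun k => |g k|) :=
    hsum123.of_nonneg_of_le (fun k => abs_nonneg _) habs
  have hsg : Summable g := hsabs.of_abs
  refine ⟨hsg, ?_⟩
  -- the bound
  have step1 : |∑' k, g k| ≤ ∑' k, |g k| := by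
    have := norm_tsum_le_tsum_norm (f := g) (by simpa [Real.norm_eq_abs] using hsabs)
    simpa [Real.norm_eq_abs] using this
  have step2 : ∑' k, |g k| ≤ ∑' k, (h1 k + h2 k + h3 k) :=
    Summable.tsum_le_tsum habs hsabs hsum123
  have step3 : ∑' k, (h1 k + h2 k + h3 k) = (∑' k, h1 k) + (∑' k, h2 k) + (∑' k, h3 k) := by
    rw [Summable.tsum_add (hs1.add hs2) hs3, Summable.tsum_add hs1 hs2]
  -- bound tsum h1
  have bh1 : ∑' k, h1 k ≤ D * (2/(n:ℝ)) * S := by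
    have e1 : ∑' k, h1 k = ∑ k ∈ Finset.range (2*n+1), h1 k := by
      apply tsum_eq_sum
      intro k hk
      rw [Finset.mem_range, not_lt] at hk
      rw [hh1]; exact if_neg (by omega)
    rw [e1, Finset.sum_range_succ']
    have e0 : h1 0 = 0 := by rw [hh1]; exact if_neg (by omega)
    rw [e0, add_zero]
    have e2 : ∀ i ∈ Finset.range (2*n), h1 (i+1) = D * (2/(n:ℝ)) * ((i:ℝ)+1)^(-s) := by
      intro i hi
      rw [Finset.mem_range] at hi
      simp only [hh1]
      rw [if_pos (⟨by omega, by omega⟩ : 1 ≤ i+1 ∧ i+1 ≤ 2*n)]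
      congr 2
      push_cast; ring
    rw [Finset.sum_congr rfl e2, ← Finset.mul_sum]
    exact mul_le_mul_of_nonneg_left hS (by positivity)
  -- bound tsum h2
  have bh2 : ∑' k, h2 k ≤ D * 2^s * (n:ℝ)^(-s) * (2 * (1 + Real.log n)) := by
    have e1 : ∑' k, h2 k = ∑ k ∈ Finset.range (2*n+1), h2 k := by
      apply tsum_eq_sum
      intro k hk
      rw [Finset.mem_range, not_lt] at hk
      rw [hh2]; exact if_neg (by omega)
    rw [e1]
    have e2 : ∀ k ∈ Finset.range (2*n+1), h2 k ≤
        D * 2^s * (n:ℝ)^(-s) * (if k = n then 0 else |(n:ℝ)-(k:ℝ)|⁻¹) := by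
      intro k hk
      simp only [hh2]
      by_cases hc : 1 ≤ k ∧ k ≠ n ∧ k ≤ 2*n
      · rw [if_pos hc, if_neg hc.2.1]
      · rw [if_neg hc]
        have : (0:ℝ) ≤ (if k = n then 0 else |(n:ℝ)-(k:ℝ)|⁻¹) := by
          split <;> positivity
        positivity
    calc ∑ k ∈ Finset.range (2*n+1), h2 k
        ≤ ∑ k ∈ Finset.range (2*n+1),
            D * 2^s * (n:ℝ)^(-s) * (if k = n then 0 else |(n:ℝ)-(k:ℝ)|⁻¹) :=
          Finset.sum_le_sum e2
      _ = D * 2^s * (n:ℝ)^(-s) *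
            ∑ k ∈ Finset.range (2*n+1), (if k = n then 0 else |(n:ℝ)-(k:ℝ)|⁻¹) := by
          rw [Finset.mul_sum]
      _ ≤ D * 2^s * (n:ℝ)^(-s) * (2 * (1 + Real.log n)) :=
          mul_le_mul_of_nonneg_left (mid n (by omega)) (by positivity)
  -- bound tsum h3
  have bh3 : ∑' k, h3 k ≤ D * (2 * T) := by
    have e1 : (∑ k ∈ Finset.range (2*n+1), h3 k) + ∑' j, h3 (j + (2*n+1)) = ∑' k, h3 k :=
      Summable.sum_add_tsum_nat_add (2*n+1) hs3
    have e0 : ∑ k ∈ Finset.range (2*n+1), h3 k = 0 := by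
      apply Finset.sum_eq_zero
      intro k hk
      rw [Finset.mem_range] at hk
      rw [hh3]; exact if_neg (by omega)
    rw [← e1, e0, zero_add]
    have : ∑' j, h3 (j + (2*n+1)) ≤ 2*D*T := by
      apply Summable.tsum_le_of_sum_range_le hs3tail
      intro m
      calc ∑ j ∈ Finset.range m, h3 (j + (2*n+1))
          = 2*D * ∑ j ∈ Finset.range m, ((j:ℝ)+(2*(n:ℝ)+1))^(-(1+s)) := by
            rw [Finset.mul_sum]; exact Finset.sum_congr rfl (fun j _ => htail_eq j)
        _ ≤ 2*D*T := mul_le_mul_of_nonneg_left (hT m) (by positivity)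
    linarith [this]
  calc |∑' k, g k| ≤ (∑' k, h1 k) + (∑' k, h2 k) + (∑' k, h3 k) := by
        rw [← step3]; exact step1.trans step2
    _ ≤ D * (2/(n:ℝ)) * S + D * 2^s * (n:ℝ)^(-s) * (2 * (1 + Real.log n)) + D * (2*T) := by
        linarith [bh1, bh2, bh3]
    _ = D * ((2/(n:ℝ)) * S + 2 ^ s * (n:ℝ) ^ (-s) * (2 * (1 + Real.log n)) + 2 * T) := by
        ring

/-- transforms A(n) = Σ_{k≥1, n−k odd} α_k²/(n−k) and A'(n) are
O(log(en)/√n) and their difference is O(log(en)/n). -/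
theorem stmt5 (C : ℝ) (hC : 0 < C) :
    ∃ C' : ℝ, ∀ a a' : ℕ → ℝ,
      (∀ k : ℕ, 1 ≤ k →
        |a k| ≤ C * (k:ℝ) ^ (-(1:ℝ)/4) ∧ |a' k| ≤ C * (k:ℝ) ^ (-(1:ℝ)/4) ∧
        |a' k - a k| ≤ C * (k:ℝ) ^ (-(3:ℝ)/4)) →
      ∀ n : ℕ, 2 ≤ n →
        |∑' k : ℕ, (if 1 ≤ k ∧ Odd ((n:ℤ) - (k:ℤ)) then a k ^ 2 / ((n:ℝ) - k) else 0)| ≤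
            C' * Real.log (Real.exp 1 * n) / Real.sqrt n ∧
        |∑' k : ℕ, (if 1 ≤ k ∧ Odd ((n:ℤ) - (k:ℤ)) then a' k ^ 2 / ((n:ℝ) - k) else 0)| ≤
            C' * Real.log (Real.exp 1 * n) / Real.sqrt n ∧
        |(∑' k : ℕ, (if 1 ≤ k ∧ Odd ((n:ℤ) - (k:ℤ)) then a k ^ 2 / ((n:ℝ) - k) else 0)) -
         (∑' k : ℕ, (if 1 ≤ k ∧ Odd ((n:ℤ) - (k:ℤ)) then a' k ^ 2 / ((n:ℝ) - k) else 0))| ≤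
            C' * Real.log (Real.exp 1 * n) / n := by
  refine ⟨40 * C^2, ?_⟩
  intro a a' hyp n hn
  have hn1 : 1 ≤ n := by omega
  have hN0 : (0:ℝ) < (n:ℝ) := by positivity
  have hN1 : (1:ℝ) ≤ (n:ℝ) := by exact_mod_cast hn1
  have hL : Real.log (Real.exp 1 * n) = 1 + Real.log n := by
    rw [Real.log_mul (Real.exp_ne_zero 1) (by positivity), Real.log_exp]
  have hlogn : 0 ≤ Real.log n := Real.log_nonneg hN1
  have hx0 : 0 < Real.sqrt n := Real.sqrt_pos.mpr hN0
  have hx2 : (Real.sqrt n)^2 = (n:ℝ) := Real.sq_sqrt hN0.le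
  have hs2 : Real.sqrt 2 ≤ 1.5 := by
    rw [show (1.5:ℝ) = Real.sqrt (1.5^2) from (Real.sqrt_sq (by norm_num)).symm]
    exact Real.sqrt_le_sqrt (by norm_num)
  have hs2' : 1 ≤ Real.sqrt 2 := by
    rw [show (1:ℝ) = Real.sqrt 1 from (Real.sqrt_one).symm]
    exact Real.sqrt_le_sqrt (by norm_num)
  have hs2pos : 0 < Real.sqrt 2 := by linarith
  -- the half-case bound, applied to any sequence with the 1/4-decay
  have half : ∀ c : ℕ → ℝ, (∀ k : ℕ, 1 ≤ k → |c k| ≤ C * (k:ℝ) ^ (-(1:ℝ)/4)) →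
      Summable (fun k : ℕ => if 1 ≤ k ∧ Odd ((n:ℤ) - (k:ℤ)) then c k ^ 2 / ((n:ℝ) - k) else 0) ∧
      |∑' k : ℕ, (if 1 ≤ k ∧ Odd ((n:ℤ) - (k:ℤ)) then c k ^ 2 / ((n:ℝ) - k) else 0)| ≤
        40 * C^2 * Real.log (Real.exp 1 * n) / Real.sqrt n := by
    intro c hc
    have hb : ∀ k : ℕ, 1 ≤ k → |c k ^ 2| ≤ C^2 * (k:ℝ) ^ (-(1/2:ℝ)) := by
      intro k hk
      have hk0 : (0:ℝ) < (k:ℝ) := by exact_mod_cast hk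
      have e : ((k:ℝ) ^ (-(1:ℝ)/4))^2 = (k:ℝ) ^ (-(1/2:ℝ)) := by
        rw [sq, ← Real.rpow_add hk0]; norm_num
      have h1 := hc k hk
      have h2 : |c k ^ 2| = |c k|^2 := by rw [abs_pow]
      rw [h2, ← e]
      calc |c k|^2 ≤ (C * (k:ℝ) ^ (-(1:ℝ)/4))^2 :=
            pow_le_pow_left₀ (abs_nonneg _) h1 2
        _ = C^2 * ((k:ℝ) ^ (-(1:ℝ)/4))^2 := by ring
    have hS : ∑ k ∈ Finset.range (2*n), ((k:ℝ)+1) ^ (-(1/2:ℝ)) ≤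
        2 * Real.sqrt (2*(n:ℝ)) := by
      have := F1 (2*n)
      calc ∑ k ∈ Finset.range (2*n), ((k:ℝ)+1) ^ (-(1/2:ℝ))
          ≤ 2 * Real.sqrt ((2*n : ℕ) : ℝ) := this
        _ = 2 * Real.sqrt (2*(n:ℝ)) := by push_cast; ring_nf
    have hT := fun m => Thalf n m hn1
    have hkey := key n hn (1/2) (C^2) (2 * Real.sqrt (2*(n:ℝ)))
      (2 * (2*(n:ℝ)) ^ (-(1/2:ℝ))) (by norm_num) (by positivity)
      (fun k => c k ^ 2) hb hS hT
    refine ⟨hkey.1, hkey.2.trans ?_⟩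
    -- numeric estimate
    rw [hL, rpow_neg_half_eq _ hN0.le,
      show ((2:ℝ)^((1:ℝ)/2) : ℝ) = Real.sqrt 2 from (Real.sqrt_eq_rpow 2).symm,
      Real.sqrt_mul (by norm_num : (0:ℝ) ≤ 2),
      rpow_neg_half_eq _ (by positivity : (0:ℝ) ≤ 2*(n:ℝ)),
      Real.sqrt_mul (by norm_num : (0:ℝ) ≤ 2)]
    set x := Real.sqrt (n:ℝ) with hxdef
    set l := Real.log (n:ℝ) with hldef
    have e1 : 2/(n:ℝ) * (2*(Real.sqrt 2 * x)) = (4 * Real.sqrt 2) / x := by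
      rw [← hx2]; field_simp; ring
    have e2 : Real.sqrt 2 * x⁻¹ * (2 * (1 + l)) = (2 * Real.sqrt 2 * (1 + l)) / x := by
      field_simp
    have e3 : (2:ℝ) * (2 * (Real.sqrt 2 * x)⁻¹) = (4 / Real.sqrt 2) / x := by
      rw [mul_inv]; field_simp; norm_num
    rw [e1, e2, e3, ← add_div, ← add_div, ← mul_div_assoc, div_le_div_iff₀ hx0 hx0]
    have hgoal : 4 * Real.sqrt 2 + 2 * Real.sqrt 2 * (1+l) + 4 / Real.sqrt 2 ≤
        40 * (1+l) := by
      have h4 : 4 / Real.sqrt 2 ≤ 4 := by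
        rw [div_le_iff₀ hs2pos]; nlinarith
      nlinarith
    calc C ^ 2 * (4 * Real.sqrt 2 + 2 * Real.sqrt 2 * (1+l) + 4 / Real.sqrt 2) * x
        ≤ C^2 * (40 * (1+l)) * x := by
          apply mul_le_mul_of_nonneg_right _ hx0.le
          exact mul_le_mul_of_nonneg_left hgoal (by positivity)
      _ = 40 * C^2 * (1+l) * x := by ring
  obtain ⟨ha, haS⟩ := half a (fun k hk => (hyp k hk).1)
  obtain ⟨ha', haS'⟩ := half a' (fun k hk => (hyp k hk).2.1)
  refine ⟨haS, haS', ?_⟩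
  -- difference part
  have hdiff : (∑' k : ℕ, (if 1 ≤ k ∧ Odd ((n:ℤ) - (k:ℤ)) then a k ^ 2 / ((n:ℝ) - k) else 0)) -
      (∑' k : ℕ, (if 1 ≤ k ∧ Odd ((n:ℤ) - (k:ℤ)) then a' k ^ 2 / ((n:ℝ) - k) else 0)) =
      ∑' k : ℕ, (if 1 ≤ k ∧ Odd ((n:ℤ) - (k:ℤ)) then (a k ^ 2 - a' k ^ 2) / ((n:ℝ) - k) else 0) := by
    rw [← Summable.tsum_sub ha ha']
    congr 1
    funext k
    by_cases hcond : 1 ≤ k ∧ Odd ((n:ℤ) - (k:ℤ))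
    · simp only [if_pos hcond, sub_div]
    · simp only [if_neg hcond, sub_zero]
  rw [hdiff]
  have hb : ∀ k : ℕ, 1 ≤ k → |a k ^ 2 - a' k ^ 2| ≤ (2*C^2) * (k:ℝ) ^ (-(1:ℝ)) := by
    intro k hk
    have hk0 : (0:ℝ) < (k:ℝ) := by exact_mod_cast hk
    obtain ⟨h1, h2, h3⟩ := hyp k hk
    have e : a k ^ 2 - a' k ^ 2 = (a k - a' k) * (a k + a' k) := by ring
    rw [e, abs_mul]
    have hA : |a k - a' k| ≤ C * (k:ℝ) ^ (-(3:ℝ)/4) := by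
      rw [abs_sub_comm]; exact h3
    have hB : |a k + a' k| ≤ 2 * C * (k:ℝ) ^ (-(1:ℝ)/4) := by
      calc |a k + a' k| ≤ |a k| + |a' k| := abs_add_le _ _
        _ ≤ 2 * C * (k:ℝ) ^ (-(1:ℝ)/4) := by linarith
    calc |a k - a' k| * |a k + a' k| ≤
          (C * (k:ℝ) ^ (-(3:ℝ)/4)) * (2 * C * (k:ℝ) ^ (-(1:ℝ)/4)) :=
        mul_le_mul hA hB (abs_nonneg _) (by positivity)
      _ = (2*C^2) * ((k:ℝ) ^ (-(3:ℝ)/4) * (k:ℝ) ^ (-(1:ℝ)/4)) := by ring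
      _ = (2*C^2) * (k:ℝ) ^ (-(1:ℝ)) := by
          rw [← Real.rpow_add hk0]; norm_num
  have hS : ∑ k ∈ Finset.range (2*n), ((k:ℝ)+1) ^ (-(1:ℝ)) ≤ 1 + Real.log (2*(n:ℝ)) := by
    have := F2 (2*n)
    calc ∑ k ∈ Finset.range (2*n), ((k:ℝ)+1) ^ (-(1:ℝ))
        = ∑ k ∈ Finset.range (2*n), ((k:ℝ)+1)⁻¹ := by
          refine Finset.sum_congr rfl (fun k _ => ?_)
          rw [Real.rpow_neg_one]
      _ ≤ 1 + Real.log ((2*n : ℕ) : ℝ) := this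
      _ = 1 + Real.log (2*(n:ℝ)) := by push_cast; ring_nf
  have hT := fun m => Tone n m hn1
  have hkey := key n hn 1 (2*C^2) (1 + Real.log (2*(n:ℝ))) ((2*(n:ℝ))⁻¹)
    (by norm_num) (by positivity) (fun k => a k ^ 2 - a' k ^ 2) hb hS hT
  refine hkey.2.trans ?_
  -- numeric estimate for the difference
  rw [hL, Real.rpow_neg_one, Real.rpow_one]
  have hlog2 : Real.log 2 ≤ 1 := by
    calc Real.log 2 ≤ 2 - 1 := Real.log_le_sub_one_of_pos (by norm_num)
      _ = 1 := by norm_num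
  have hlog2n : Real.log (2*(n:ℝ)) = Real.log 2 + Real.log n := by
    rw [Real.log_mul (by norm_num) (by positivity)]
  have e : 2/(n:ℝ) * (1 + Real.log (2*(n:ℝ))) + 2 * ((n:ℝ))⁻¹ * (2*(1 + Real.log n))
      + 2 * (2*(n:ℝ))⁻¹ =
      (2*(1 + Real.log (2*(n:ℝ))) + 4*(1 + Real.log n) + 1) / (n:ℝ) := by
    field_simp; ring
  rw [e]
  have inner : 2*(1 + Real.log (2*(n:ℝ))) + 4*(1 + Real.log n) + 1 ≤
      20 * (1 + Real.log n) := by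
    rw [hlog2n]; linarith
  calc (2*C^2) * ((2*(1 + Real.log (2*(n:ℝ))) + 4*(1 + Real.log n) + 1) / (n:ℝ))
      ≤ (2*C^2) * ((20 * (1 + Real.log n)) / (n:ℝ)) := by
        apply mul_le_mul_of_nonneg_left _ (by positivity)
        exact div_le_div_of_nonneg_right inner hN0.le
    _ = 40 * C^2 * (1 + Real.log n) / (n:ℝ) := by ring
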